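/- Let (A, m) be a commutative Noetherian local ring with a nonzerodivisor y ∈ m, and let I ⊆ m be an ideal. Assume that the image of y in A/Iⁿ is a nonzerodivisor for all n > 0, that the image of I in A/yA is a normal ideal of A/yA, and that A/yA is an integrally closed domain. Then I is a normal ideal of A. -/

import Mathlib

/-- An element `x` of a commutative ring is *integral over an ideal* `I` if it satisfies an
equation `x ^ n + a 1 * x ^ (n - 1) + ⋯ + a n = 0` with `n ≥ 1` and `a i ∈ I ^ i`. -/
def IsIntegralOverIdeal {A : Type*} [CommRing A] (I : Ideal A) (x : A) : Prop :=
  ∃ n : ℕ, 0 < n ∧ ∃ a : ℕ → A, (∀ i ∈ Finset.Icc 1 n, a i ∈ I ^ i) ∧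
    x ^ n + ∑ i ∈ Finset.Icc 1 n, a i * x ^ (n - i) = 0

/-- An ideal `I` is *integrally closed* if every element integral over `I` belongs to `I`. -/
def Ideal.IsIntegrallyClosedIdeal {A : Type*} [CommRing A] (I : Ideal A) : Prop :=
  ∀ x : A, IsIntegralOverIdeal I x → x ∈ I

/-- An ideal `I` is a *normal ideal* if `I ^ n` is integrally closed for all `n > 0`. -/
def Ideal.IsNormalIdeal {A : Type*} [CommRing A] (I : Ideal A) : Prop :=
  ∀ n : ℕ, 0 < n → (I ^ n).IsIntegrallyClosedIdeal

open Polynomial in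
/-- In a Noetherian domain, an "almost integral" element over an ideal (witnessed by a single
nonzero multiplier `b` with `b * w ^ j ∈ P ^ j` for all `j`) is integral over the ideal.
Proved via the Rees algebra of `P`. -/
theorem isIntegralOverIdeal_of_almost {S : Type*} [CommRing S] [IsDomain S] [IsNoetherianRing S]
    (P : Ideal S) (b w : S) (hb : b ≠ 0) (h : ∀ j : ℕ, b * w ^ j ∈ P ^ j) :
    IsIntegralOverIdeal P w := by
  classical
  have hβ : ∀ j : ℕ, (monomial j (b * w ^ j) : S[X]) ∈ reesAlgebra P := fun j =>
    reesAlgebra.monomial_mem.mpr (h j)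
  set R' := reesAlgebra P with hR'
  let β : ℕ → R' := fun j => ⟨monomial j (b * w ^ j), hβ j⟩
  -- an ascending chain of ideals in the (Noetherian) Rees algebra
  let J : ℕ →o Ideal R' :=
    ⟨fun k => Ideal.span (Set.range (fun j : Fin (k + 1) => β j)), by
      intro k l hkl
      apply Ideal.span_mono
      rintro _ ⟨j, rfl⟩
      exact ⟨⟨(j : ℕ), by omega⟩, rfl⟩⟩
  obtain ⟨k, hk⟩ := monotone_stabilizes_iff_noetherian.mpr
    (inferInstance : IsNoetherian R' R') J
  have hmem : β (k + 1) ∈ J k := by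
    have hJ : J k = J (k + 1) := hk (k + 1) (by omega)
    have : β (k + 1) ∈ J (k + 1) :=
      Ideal.subset_span ⟨⟨k + 1, by omega⟩, rfl⟩
    rwa [hJ]
  obtain ⟨c, hc⟩ := (Submodule.mem_span_range_iff_exists_fun R').mp hmem
  -- push the relation down to S[X]
  have hc' : ∑ j : Fin (k + 1), (c j : S[X]) * monomial (j : ℕ) (b * w ^ (j : ℕ))
      = monomial (k + 1) (b * w ^ (k + 1)) := by
    have := congrArg (Subtype.val) hc
    simpa using this
  -- factor out `C b` and cancel it
  have hkey : ∑ j : Fin (k + 1), (c j : S[X]) * monomial (j : ℕ) (w ^ (j : ℕ))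
      = monomial (k + 1) (w ^ (k + 1)) := by
    apply mul_left_cancel₀ (show (C b : S[X]) ≠ 0 from fun hC => hb (by
      simpa using congrArg (fun p => coeff p 0) hC))
    rw [Finset.mul_sum]
    calc ∑ j : Fin (k + 1), C b * ((c j : S[X]) * monomial (j : ℕ) (w ^ (j : ℕ)))
        = ∑ j : Fin (k + 1), (c j : S[X]) * monomial (j : ℕ) (b * w ^ (j : ℕ)) := by
          apply Finset.sum_congr rfl
          intro j _
          rw [mul_left_comm, C_mul_monomial]
      _ = monomial (k + 1) (b * w ^ (k + 1)) := hc'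
      _ = C b * monomial (k + 1) (w ^ (k + 1)) := by rw [C_mul_monomial]
  -- a total function giving the relevant coefficients
  set d : ℕ → S := fun j => if hj : j < k + 1 then ((c ⟨j, hj⟩ : S[X]).coeff (k + 1 - j)) else 0
    with hd
  have hdP : ∀ i : ℕ, 1 ≤ i → i ≤ k + 1 → d (k + 1 - i) ∈ P ^ i := by
    intro i hi1 hi2
    have hj : k + 1 - i < k + 1 := by omega
    rw [hd]
    simp only [dif_pos hj]
    have e : k + 1 - (k + 1 - i) = i := by omega
    rw [e]
    exact (c ⟨k + 1 - i, hj⟩).2 i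
  -- compare coefficients in degree `k+1`
  have hco : (w : S) ^ (k + 1) = ∑ j ∈ Finset.range (k + 1), d j * w ^ j := by
    have h1 := congrArg (fun p => coeff p (k + 1)) hkey
    simp only [finset_sum_coeff] at h1
    rw [coeff_monomial, if_pos rfl] at h1
    rw [← h1]
    rw [← Fin.sum_univ_eq_sum_range (fun j => d j * w ^ j) (k + 1)]
    apply Finset.sum_congr rfl
    intro j _
    have e : (k + 1 - (j : ℕ)) + (j : ℕ) = k + 1 := by omega
    have hcm := coeff_mul_monomial (c j : S[X]) (j : ℕ) (k + 1 - (j : ℕ)) (w ^ (j : ℕ))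
    rw [e] at hcm
    rw [hcm, hd]
    simp only [dif_pos j.2]
  -- assemble the integral equation
  refine ⟨k + 1, by omega, fun i => -(d (k + 1 - i)), ?_, ?_⟩
  · intro i hi
    rw [Finset.mem_Icc] at hi
    exact neg_mem (hdP i hi.1 hi.2)
  · have hsum : ∑ i ∈ Finset.Icc 1 (k + 1), -(d (k + 1 - i)) * w ^ (k + 1 - i)
        = -∑ j ∈ Finset.range (k + 1), d j * w ^ j := by
      rw [← Finset.sum_neg_distrib]
      apply Finset.sum_nbij' (fun i => k + 1 - i) (fun j => k + 1 - j)
      · intro i hi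
        rw [Finset.mem_Icc] at hi
        rw [Finset.mem_range]
        omega
      · intro j hj
        rw [Finset.mem_range] at hj
        rw [Finset.mem_Icc]
        omega
      · intro i hi
        rw [Finset.mem_Icc] at hi
        omega
      · intro j hj
        rw [Finset.mem_range] at hj
        omega
      · intro i hi
        rw [neg_mul]
    rw [hsum, hco]
    ring

/-- let `(A, 𝔪)` be a Noetherian local ring with a nonzerodivisor `y ∈ 𝔪`
and an ideal `I ⊆ 𝔪`.  Assume the image of `y` in `A/Iⁿ` is a nonzerodivisor for all `n > 0`,
the image of `I` in `A/yA` is a normal ideal of `A/yA`, and `A/yA` is an integrally closed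
domain.  Then `I` is a normal ideal of `A`. -/
theorem isNormalIdeal_of_quotient
    (A : Type*) [CommRing A] [IsNoetherianRing A] [IsLocalRing A]
    (y : A) (hy : y ∈ IsLocalRing.maximalIdeal A) (hynzd : y ∈ nonZeroDivisors A)
    (I : Ideal A) (hI : I ≤ IsLocalRing.maximalIdeal A)
    (hreg : ∀ n : ℕ, 0 < n →
      Ideal.Quotient.mk (I ^ n) y ∈ nonZeroDivisors (A ⧸ I ^ n))
    (hnormal : (I.map (Ideal.Quotient.mk (Ideal.span {y}))).IsNormalIdeal)
    (hdom : IsDomain (A ⧸ Ideal.span {y}))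
    (hicl : IsIntegrallyClosed (A ⧸ Ideal.span {y})) :
    I.IsNormalIdeal := by
  classical
  intro n hn x hx
  set Y : Ideal A := Ideal.span {y} with hYdef
  have hYm : Y ≤ IsLocalRing.maximalIdeal A := by
    rw [hYdef, Ideal.span_le]; simpa using hy
  have hmtop : IsLocalRing.maximalIdeal A ≠ ⊤ :=
    (IsLocalRing.maximalIdeal.isMaximal A).ne_top
  have hYtop : Y ≠ ⊤ := fun h => hmtop (top_le_iff.mp (h ▸ hYm))
  have hYprime : Y.IsPrime := (Ideal.Quotient.isDomain_iff_prime Y).mp hdom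
  -- the division lemma coming from `hreg`
  have hdiv : ∀ (k : ℕ), 0 < k → ∀ (e : ℕ) (v : A), y ^ e * v ∈ I ^ k → v ∈ I ^ k := by
    intro k hk e
    induction e with
    | zero => intro v hv; simpa using hv
    | succ e ih =>
      intro v hv
      apply ih
      have h0 : (Ideal.Quotient.mk (I ^ k)) (y ^ e * v) * (Ideal.Quotient.mk (I ^ k)) y = 0 := by
        rw [← map_mul, Ideal.Quotient.eq_zero_iff_mem]
        have : y ^ e * v * y = y ^ (e + 1) * v := by ring
        rwa [this]
      have := (mul_right_mem_nonZeroDivisors_eq_zero_iff (hreg k hk)).mp h0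
      rwa [Ideal.Quotient.eq_zero_iff_mem] at this
  set B : Ideal A := I ^ n with hBdef
  have hBm : B ≤ IsLocalRing.maximalIdeal A := (Ideal.pow_le_self hn.ne').trans hI
  have hdivB : ∀ (j : ℕ), 0 < j → ∀ (e : ℕ) (v : A), y ^ e * v ∈ B ^ j → v ∈ B ^ j := by
    intro j hj e v hv
    have hp : B ^ j = I ^ (n * j) := by rw [hBdef, pow_mul]
    rw [hp] at hv ⊢
    exact hdiv (n * j) (by positivity) e v hv
  -- nilpotent elements vanish
  have hnil : ∀ z : A, ∀ m : ℕ, 0 < m → z ^ m = 0 → z = 0 := by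
    intro z m hm hzm
    have hall : ∀ c : ℕ, z ∈ Y ^ c := by
      intro c
      induction c with
      | zero => simp
      | succ c ih =>
        rw [hYdef, Ideal.span_singleton_pow, Ideal.mem_span_singleton] at ih
        obtain ⟨v, hv⟩ := ih
        have hv0 : v ^ m = 0 := by
          have h1 : v ^ m * y ^ (c * m) = 0 := by
            have : (y ^ c * v) ^ m = (y ^ c) ^ m * v ^ m := by ring
            calc v ^ m * y ^ (c * m) = (y ^ c) ^ m * v ^ m := by
                  rw [← pow_mul]; ring
              _ = (y ^ c * v) ^ m := by rw [this]
              _ = z ^ m := by rw [← hv]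
              _ = 0 := hzm
          exact (mul_right_mem_nonZeroDivisors_eq_zero_iff (pow_mem hynzd (c * m))).mp h1
        have hvY : v ∈ Y := by
          have : (Ideal.Quotient.mk Y v) ^ m = 0 := by
            rw [← map_pow, Ideal.Quotient.eq_zero_iff_mem, hv0]; exact Y.zero_mem
          have := pow_eq_zero_iff hm.ne' |>.mp this
          rwa [Ideal.Quotient.eq_zero_iff_mem] at this
        rw [hYdef, Ideal.mem_span_singleton] at hvY
        obtain ⟨u, hu⟩ := hvY
        rw [hYdef, Ideal.span_singleton_pow, Ideal.mem_span_singleton]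
        exact ⟨u, by rw [hv, hu]; ring⟩
    have : z ∈ (⊥ : Ideal A) := by
      rw [← Ideal.iInf_pow_eq_bot_of_isLocalRing Y hYtop]
      exact Submodule.mem_iInf _ |>.mpr hall
    simpa using this
  obtain ⟨m, hm, a, ha, heq⟩ := hx
  have hxm : x ^ m = -∑ i ∈ Finset.Icc 1 m, a i * x ^ (m - i) :=
    eq_neg_of_add_eq_zero_left heq
  by_cases hBY : B ≤ Y
  · -- degenerate case : `B ≤ (y)` forces `B = 0` and then `x = 0`
    have hB0 : B = ⊥ := by
      have hle : B ≤ (IsLocalRing.maximalIdeal A) • B := by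
        rw [Ideal.smul_eq_mul]
        intro u hu
        have huY : u ∈ Y := hBY hu
        rw [hYdef, Ideal.mem_span_singleton] at huY
        obtain ⟨v, hv⟩ := huY
        have hvB : v ∈ B := by
          have h1 : v ∈ B ^ 1 := hdivB 1 one_pos 1 v (by rw [pow_one, pow_one, ← hv]; exact hu)
          rwa [pow_one] at h1
        rw [hv]
        exact Ideal.mul_mem_mul hy hvB
      exact Submodule.eq_bot_of_le_smul_of_le_jacobson_bot (IsLocalRing.maximalIdeal A) B
        (IsNoetherian.noetherian B) hle (IsLocalRing.maximalIdeal_le_jacobson ⊥)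
    have hx0 : x ^ m = 0 := by
      rw [hxm, neg_eq_zero]
      apply Finset.sum_eq_zero
      intro i hi
      rw [Finset.mem_Icc] at hi
      have h1 : a i ∈ B ^ i := ha i (Finset.mem_Icc.mpr hi)
      rw [hB0] at h1
      have h2 : a i ∈ (⊥ : Ideal A) := Ideal.pow_le_self (by omega : i ≠ 0) h1
      rw [Ideal.mem_bot.mp h2, zero_mul]
    rw [hnil x m hm hx0]
    exact B.zero_mem
  · -- main case
    have hpow_not_le : ¬ B ^ (m - 1) ≤ Y := by
      intro hle
      rcases Nat.eq_zero_or_pos (m - 1) with h0 | hpos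
      · rw [h0, pow_zero, Ideal.one_eq_top] at hle; exact hYtop (top_le_iff.mp hle)
      · exact hBY (hYprime.le_of_pow_le hle)
    obtain ⟨b, hbB, hbY⟩ := SetLike.not_le_iff_exists.mp hpow_not_le
    -- Claim 1 : b * x ^ j ∈ B ^ j for all j
    have claim1 : ∀ j : ℕ, b * x ^ j ∈ B ^ j := by
      intro j
      induction j using Nat.strong_induction_on with
      | _ j ih =>
        by_cases hjm : j < m
        · have hle : B ^ (m - 1) ≤ B ^ j := Ideal.pow_le_pow_right (by omega)
          exact Ideal.mul_mem_right _ _ (hle hbB)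
        · push_neg at hjm
          have hxj : x ^ j = x ^ (j - m) * x ^ m := by
            rw [← pow_add]; congr 1; omega
          rw [hxj, hxm, mul_neg, mul_neg]
          apply neg_mem
          rw [Finset.mul_sum, Finset.mul_sum]
          apply Ideal.sum_mem
          intro i hi
          rw [Finset.mem_Icc] at hi
          have hterm : b * (x ^ (j - m) * (a i * x ^ (m - i))) = a i * (b * x ^ (j - i)) := by
            have : x ^ (j - m) * x ^ (m - i) = x ^ (j - i) := by
              rw [← pow_add]; congr 1; omega
            calc b * (x ^ (j - m) * (a i * x ^ (m - i)))
                = a i * (b * (x ^ (j - m) * x ^ (m - i))) := by ring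
              _ = a i * (b * x ^ (j - i)) := by rw [this]
          rw [hterm]
          have h1 : a i ∈ B ^ i := ha i (Finset.mem_Icc.mpr hi)
          have h2 : b * x ^ (j - i) ∈ B ^ (j - i) := ih (j - i) (by omega)
          have := Ideal.mul_mem_mul h1 h2
          rwa [← pow_add, (by omega : i + (j - i) = j)] at this
    -- Claim 2 : x ∈ B ⊔ Y ^ c for all c
    have claim2 : ∀ c : ℕ, x ∈ B ⊔ Y ^ c := by
      intro c
      induction c with
      | zero => simp
      | succ c ih =>
        obtain ⟨z, hz, u, hu, hzu⟩ := Submodule.mem_sup.mp ih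
        rw [hYdef, Ideal.span_singleton_pow, Ideal.mem_span_singleton] at hu
        obtain ⟨w, hw⟩ := hu
        -- b * u ^ j ∈ B ^ j
        have hbu : ∀ j : ℕ, b * u ^ j ∈ B ^ j := by
          intro j
          have hux : u = x + -z := by rw [← hzu]; ring
          rw [hux, add_pow, Finset.mul_sum]
          apply Ideal.sum_mem
          intro i hi
          have hij : i ≤ j := Nat.lt_succ_iff.mp (Finset.mem_range.mp hi)
          have hterm : b * (x ^ i * (-z) ^ (j - i) * (j.choose i : A))
              = ((b * x ^ i) * (-z) ^ (j - i)) * (j.choose i : A) := by ring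
          rw [hterm]
          apply Ideal.mul_mem_right
          have h1 : b * x ^ i ∈ B ^ i := claim1 i
          have h2 : (-z) ^ (j - i) ∈ B ^ (j - i) := by
            rw [neg_pow]
            exact Ideal.mul_mem_left _ _ (Ideal.pow_mem_pow hz _)
          have := Ideal.mul_mem_mul h1 h2
          rwa [← pow_add, (by omega : i + (j - i) = j)] at this
        -- b * w ^ j ∈ B ^ j
        have hbw : ∀ j : ℕ, b * w ^ j ∈ B ^ j := by
          intro j
          rcases Nat.eq_zero_or_pos j with rfl | hj
          · simpa using Submodule.mem_top
          · apply hdivB j hj (c * j)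
            have : y ^ (c * j) * (b * w ^ j) = b * u ^ j := by
              rw [hw, mul_pow, ← pow_mul]
              ring
            rw [this]
            exact hbu j
        -- pass to the quotient A ⧸ Y
        haveI := hdom
        set mkY := Ideal.Quotient.mk Y with hmkY
        set P : Ideal (A ⧸ Y) := (I.map mkY) ^ n with hP
        have hPB : B.map mkY = P := by rw [hBdef, hP, Ideal.map_pow]
        have hbne : mkY b ≠ 0 := fun h => hbY (Ideal.Quotient.eq_zero_iff_mem.mp h)
        have halmost : ∀ j : ℕ, mkY b * (mkY w) ^ j ∈ P ^ j := by
          intro j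
          have h1 : mkY (b * w ^ j) ∈ (B ^ j).map mkY := Ideal.mem_map_of_mem _ (hbw j)
          rw [Ideal.map_pow, hPB] at h1
          rwa [map_mul, map_pow] at h1
        have hint : IsIntegralOverIdeal P (mkY w) :=
          isIntegralOverIdeal_of_almost P (mkY b) (mkY w) hbne halmost
        have hwP : mkY w ∈ P := (hnormal n hn) _ hint
        have hwBY : w ∈ B ⊔ Y := by
          rw [← hPB] at hwP
          rwa [hmkY, Ideal.mem_quotient_iff_mem_sup] at hwP
        obtain ⟨z', hz', u', hu', hzu'⟩ := Submodule.mem_sup.mp hwBY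
        rw [hYdef, Ideal.mem_span_singleton] at hu'
        obtain ⟨r, hr⟩ := hu'
        apply Submodule.mem_sup.mpr
        refine ⟨z + y ^ c * z', Ideal.add_mem _ hz (Ideal.mul_mem_left _ _ hz'), y ^ (c + 1) * r,
          ?_, ?_⟩
        · rw [hYdef, Ideal.span_singleton_pow, Ideal.mem_span_singleton]
          exact ⟨r, rfl⟩
        · rw [← hzu, hw, ← hzu', hr]
          ring
    -- Krull intersection in A ⧸ B
    have hBtop : B ≠ ⊤ := fun h => hmtop (top_le_iff.mp (h ▸ hBm))
    haveI : Nontrivial (A ⧸ B) := Ideal.Quotient.nontrivial_iff.mpr hBtop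
    haveI : IsLocalRing (A ⧸ B) :=
      IsLocalRing.of_surjective' (Ideal.Quotient.mk B) Ideal.Quotient.mk_surjective
    set mkB := Ideal.Quotient.mk B with hmkB
    have hyB : mkB y ∈ IsLocalRing.maximalIdeal (A ⧸ B) := by
      rw [IsLocalRing.mem_maximalIdeal]
      intro hunit
      obtain ⟨v, hv⟩ := hunit.exists_right_inv
      obtain ⟨v', rfl⟩ := Ideal.Quotient.mk_surjective v
      have hsub : y * v' - 1 ∈ B := by
        rw [← Ideal.Quotient.eq_zero_iff_mem, map_sub, map_one, map_mul]
        rw [hv]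
        ring
      have h1 : (1 : A) ∈ IsLocalRing.maximalIdeal A := by
        have hyv : y * v' ∈ IsLocalRing.maximalIdeal A := Ideal.mul_mem_right _ _ hy
        have := Ideal.sub_mem _ hyv (hBm hsub)
        simpa using this
      exact hmtop ((Ideal.eq_top_iff_one _).mpr h1)
    have hfin : ∀ c : ℕ, mkB x ∈ (IsLocalRing.maximalIdeal (A ⧸ B)) ^ c := by
      intro c
      obtain ⟨z, hz, u, hu, hzu⟩ := Submodule.mem_sup.mp (claim2 c)
      have hxu : mkB x = mkB u := by
        rw [← hzu, map_add, Ideal.Quotient.eq_zero_iff_mem.mpr hz, zero_add]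
      rw [hxu]
      have h1 : mkB u ∈ (Y.map mkB) ^ c := by
        rw [← Ideal.map_pow]
        exact Ideal.mem_map_of_mem _ hu
      have h2 : Y.map mkB ≤ IsLocalRing.maximalIdeal (A ⧸ B) := by
        rw [hYdef, Ideal.map_span]
        rw [Ideal.span_le]
        intro t ht
        simp only [Set.image_singleton, Set.mem_singleton_iff] at ht
        rw [ht]
        exact hyB
      exact Ideal.pow_right_mono h2 c h1
    have hx0 : mkB x ∈ (⊥ : Ideal (A ⧸ B)) := by
      rw [← Ideal.iInf_pow_eq_bot_of_isLocalRing (IsLocalRing.maximalIdeal (A ⧸ B))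
        (IsLocalRing.maximalIdeal.isMaximal _).ne_top]
      exact Submodule.mem_iInf _ |>.mpr hfin
    have : mkB x = 0 := by simpa using hx0
    rwa [hmkB, Ideal.Quotient.eq_zero_iff_mem] at this
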